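/- In the directed balanced two-community block model with a > b and a ≠ b, fix γ ∈ (0,1/2) with γm an integer, and suppose (â,b̂) satisfies â > b̂. Then for an initial labeling e ∈ E^γ and a node i in community 1 (i.e., 1 ≤ i ≤ m), the one-step CPL rule ĉ_i(e) = argmax_{k∈{1,2}} { Σ_{ℓ=1}^2 b̃_{iℓ}(e) log θ̂_{kℓ}(e) } (with equal priors π̂₁ = π̂₂ = 1/2) assigns ĉ_i(e) = 1 if and only if ξ̃_i(σ(e)) = Σ_{j=1}^n Ãᵈ_{ij} σ_j(e) < 0, where σ_j(e) = 1 if e_j = 1 and −1 if e_j = 2. In particular, the row-normalized parameters satisfy θ̂₁₁(e) = θ̂₂₂(e) = γ â/(â+b̂) + (1−γ) b̂/(â+b̂) and θ̂₁₂(e) = θ̂₂₁(e) = γ b̂/(â+b̂) + (1−γ) â/(â+b̂), and θ̂₁₁(e) < θ̂₂₁(e). -/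

import Mathlib

open MeasureTheory ProbabilityTheory Finset

noncomputable section

/-- Confusion matrix `R(e)_{kl} = (1/n) #{i : e i = k, c i = l}` (labels in `Fin 2`,
with `0` encoding community 1 and `1` encoding community 2). -/
def Rmat (n : ℕ) (e c : Fin n → Fin 2) (k l : Fin 2) : ℝ :=
  ((univ.filter fun i => e i = k ∧ c i = l).card : ℝ) / n

/-- `Λ̂ = [n R(e) P̂]ᵀ`, i.e. `Λ̂_{kl} = n Σ_j R(e)_{lj} P̂_{jk}`. -/
def lamHat (n : ℕ) (e c : Fin n → Fin 2) (P : Fin 2 → Fin 2 → ℝ) (k l : Fin 2) : ℝ :=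
  n * ∑ j, Rmat n e c l j * P j k

/-- `θ̂`: row normalization of `Λ̂`. -/
def thetaHat (n : ℕ) (e c : Fin n → Fin 2) (P : Fin 2 → Fin 2 → ℝ) (k l : Fin 2) : ℝ :=
  lamHat n e c P k l / ∑ l', lamHat n e c P k l'

/-- Block sums `b_{il}(e) = Σ_j A i j · 1{e j = l}`. -/
def bSum {Ω : Type*} (n : ℕ) (A : Fin n → Fin n → Ω → ℝ) (e : Fin n → Fin 2)
    (i : Fin n) (l : Fin 2) (ω : Ω) : ℝ :=
  ∑ j, A i j ω * (if e j = l then 1 else 0)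

/-- The CPL criterion `log π̂_k + Σ_l b_{il}(e) log θ̂_{kl}(e)` with equal priors
`π̂₁ = π̂₂ = 1/2`. -/
def cplCrit {Ω : Type*} (n : ℕ) (A : Fin n → Fin n → Ω → ℝ) (e c : Fin n → Fin 2)
    (P : Fin 2 → Fin 2 → ℝ) (i : Fin n) (ω : Ω) (k : Fin 2) : ℝ :=
  Real.log (1 / 2) + ∑ l, bSum n A e i l ω * Real.log (thetaHat n e c P k l)

/-- One-step CPL label estimate `ĉ_i(e)` (argmax over `k`; ties resolved as
label 2, i.e. `1 : Fin 2`). -/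
def cHat {Ω : Type*} (n : ℕ) (A : Fin n → Fin n → Ω → ℝ) (e c : Fin n → Fin 2)
    (P : Fin 2 → Fin 2 → ℝ) (i : Fin n) (ω : Ω) : Fin 2 :=
  if cplCrit n A e c P i ω 1 < cplCrit n A e c P i ω 0 then 0 else 1

end

set_option maxHeartbeats 1000000 in
/-- **Reduction of the one-step CPL rule to a neighborhood majority vote.**
In the directed balanced two-community block model with `a > b`, for
`γ ∈ (0,1/2)` with `γm` an integer, estimates `â > b̂ ≥ 0`, an initial labeling
`e ∈ E^γ` and a node `i` in community 1, the row-normalized parameters satisfy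
`θ̂₁₁ = θ̂₂₂ = γâ/(â+b̂) + (1−γ)b̂/(â+b̂)`,
`θ̂₁₂ = θ̂₂₁ = γb̂/(â+b̂) + (1−γ)â/(â+b̂)`, `θ̂₁₁ < θ̂₂₁`, and the CPL rule
assigns label 1 to node `i` iff `ξ̃ᵢ(σ(e)) = Σ_j A i j σ_j(e) < 0`, where
`σ_j(e) = 1` if `e j` is label 1 and `−1` otherwise. -/
theorem stmt15
    {Ω : Type*} [MeasureSpace Ω] [IsProbabilityMeasure (ℙ : Measure Ω)]
    (m : ℕ) (hm : 0 < m)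
    (a b : ℝ) (hb0 : 0 ≤ b) (hba : b < a) (ham : a ≤ m)
    (A : Fin (2 * m) → Fin (2 * m) → Ω → ℝ)
    (hmeas : ∀ i j, Measurable (A i j))
    (h01 : ∀ i j ω, A i j ω = 0 ∨ A i j ω = 1)
    (hind : iIndepFun
      (fun p : Fin (2 * m) × Fin (2 * m) => A p.1 p.2) ℙ)
    (hmean : ∀ i j, (ℙ {ω | A i j ω = 1}).toReal =
      if ((i : ℕ) < m ↔ (j : ℕ) < m) then a / m else b / m)
    (γ : ℝ) (hγ0 : 0 < γ) (hγ2 : γ < 1 / 2)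
    (g : ℕ) (hg : (g : ℝ) = γ * m)
    (c : Fin (2 * m) → Fin 2) (hc : ∀ i, c i = if (i : ℕ) < m then 0 else 1)
    (ahat bhat : ℝ) (hbhat0 : 0 ≤ bhat) (hhat : bhat < ahat)
    (P : Fin 2 → Fin 2 → ℝ)
    (hP : ∀ k l, P k l = if k = l then ahat / m else bhat / m)
    (e : Fin (2 * m) → Fin 2)
    (he1 : (univ.filter fun i : Fin (2 * m) => (i : ℕ) < m ∧ e i = 0).card = g)
    (he2 : (univ.filter fun i : Fin (2 * m) => m ≤ (i : ℕ) ∧ e i = 1).card = g)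
    (i : Fin (2 * m)) (hi : (i : ℕ) < m) :
    (thetaHat (2 * m) e c P 0 0 = γ * (ahat / (ahat + bhat)) +
        (1 - γ) * (bhat / (ahat + bhat)) ∧
      thetaHat (2 * m) e c P 1 1 = γ * (ahat / (ahat + bhat)) +
        (1 - γ) * (bhat / (ahat + bhat))) ∧
    (thetaHat (2 * m) e c P 0 1 = γ * (bhat / (ahat + bhat)) +
        (1 - γ) * (ahat / (ahat + bhat)) ∧
      thetaHat (2 * m) e c P 1 0 = γ * (bhat / (ahat + bhat)) +
        (1 - γ) * (ahat / (ahat + bhat))) ∧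
    thetaHat (2 * m) e c P 0 0 < thetaHat (2 * m) e c P 1 0 ∧
    (∀ ω, cHat (2 * m) A e c P i ω = 0 ↔
      (∑ j, A i j ω * (if e j = 0 then (1 : ℝ) else -1)) < 0) := by
  have mpos : (0:ℝ) < m := by exact_mod_cast hm
  have hmne : (m:ℝ) ≠ 0 := ne_of_gt mpos
  have hapos : 0 < ahat := lt_of_le_of_lt hbhat0 hhat
  have hs : 0 < ahat + bhat := by linarith
  have hsne : ahat + bhat ≠ 0 := ne_of_gt hs
  -- counting
  have hlt : (univ.filter fun i : Fin (2*m) => (i:ℕ) < m).card = m := by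
    have h1 : (univ.filter fun i : Fin (2*m) => (i:ℕ) < m).card
        = ((Finset.range (2*m)).filter (fun i => i < m)).card := by
      rw [Finset.card_filter, Finset.card_filter]
      exact Fin.sum_univ_eq_sum_range (fun i => if i < m then 1 else 0) (2*m)
    rw [h1]
    have h2 : (Finset.range (2*m)).filter (fun i => i < m) = Finset.range m := by
      ext x; simp; omega
    rw [h2, Finset.card_range]
  have hge : (univ.filter fun i : Fin (2*m) => m ≤ (i:ℕ)).card = m := by
    have h2 := Finset.card_filter_add_card_filter_not
      (s := (univ : Finset (Fin (2*m)))) (p := fun i => (i:ℕ) < m)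
    simp only [Finset.card_univ, Fintype.card_fin, not_lt] at h2
    rw [hlt] at h2; omega
  have hne2 : ∀ x : Fin 2, (¬ x = 0) ↔ x = 1 := by decide
  have hsplit : ∀ (p : Fin (2*m) → Prop) (_ : DecidablePred p),
      (univ.filter fun i => p i ∧ e i = 0).card
        + (univ.filter fun i => p i ∧ e i = 1).card
        = (univ.filter fun i => p i).card := by
    intro p hp
    have h2 := Finset.card_filter_add_card_filter_not
      (s := univ.filter fun i => p i) (p := fun i => e i = 0)
    rw [Finset.filter_filter, Finset.filter_filter] at h2
    simp only [hne2] at h2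
    convert h2 using 3
  have hgm : g ≤ m := by
    have := hsplit (fun i => (i:ℕ) < m) (by infer_instance)
    rw [he1, hlt] at this; omega
  have he1' : (univ.filter fun i : Fin (2*m) => (i:ℕ) < m ∧ e i = 1).card = m - g := by
    have := hsplit (fun i => (i:ℕ) < m) (by infer_instance)
    rw [he1, hlt] at this; omega
  have he2' : (univ.filter fun i : Fin (2*m) => m ≤ (i:ℕ) ∧ e i = 0).card = m - g := by
    have := hsplit (fun i => m ≤ (i:ℕ)) (by infer_instance)
    rw [he2, hge] at this; omega
  have hc0 : ∀ x : Fin (2*m), c x = 0 ↔ (x:ℕ) < m := by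
    intro x; rw [hc x]; by_cases h : (x:ℕ) < m <;> simp [h]
  have hc1 : ∀ x : Fin (2*m), c x = 1 ↔ m ≤ (x:ℕ) := by
    intro x; rw [hc x]; by_cases h : (x:ℕ) < m <;> simp [h] <;> omega
  -- cast facts
  have hmgR : ((m - g : ℕ) : ℝ) = (1 - γ) * m := by
    rw [Nat.cast_sub hgm, hg]; ring
  have h2m : ((2*m : ℕ) : ℝ) = 2 * m := by push_cast; ring
  -- Rmat values
  have hR00 : Rmat (2*m) e c 0 0 = (γ * m) / (2*m) := by
    unfold Rmat
    rw [show (univ.filter fun i : Fin (2*m) => e i = 0 ∧ c i = 0)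
        = univ.filter fun i : Fin (2*m) => (i:ℕ) < m ∧ e i = 0 by
      ext x; simp [hc0 x, and_comm], he1, hg, h2m]
  have hR01 : Rmat (2*m) e c 0 1 = ((1-γ) * m) / (2*m) := by
    unfold Rmat
    rw [show (univ.filter fun i : Fin (2*m) => e i = 0 ∧ c i = 1)
        = univ.filter fun i : Fin (2*m) => m ≤ (i:ℕ) ∧ e i = 0 by
      ext x; simp [hc1 x, and_comm], he2', hmgR, h2m]
  have hR10 : Rmat (2*m) e c 1 0 = ((1-γ) * m) / (2*m) := by
    unfold Rmat
    rw [show (univ.filter fun i : Fin (2*m) => e i = 1 ∧ c i = 0)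
        = univ.filter fun i : Fin (2*m) => (i:ℕ) < m ∧ e i = 1 by
      ext x; simp [hc0 x, and_comm], he1', hmgR, h2m]
  have hR11 : Rmat (2*m) e c 1 1 = (γ * m) / (2*m) := by
    unfold Rmat
    rw [show (univ.filter fun i : Fin (2*m) => e i = 1 ∧ c i = 1)
        = univ.filter fun i : Fin (2*m) => m ≤ (i:ℕ) ∧ e i = 1 by
      ext x; simp [hc1 x, and_comm], he2, hg, h2m]
  -- lamHat values
  have hP00 : P 0 0 = ahat / m := by rw [hP]; norm_num
  have hP11 : P 1 1 = ahat / m := by rw [hP]; norm_num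
  have hP01 : P 0 1 = bhat / m := by rw [hP]; simp [Fin.ext_iff]
  have hP10 : P 1 0 = bhat / m := by rw [hP]; simp [Fin.ext_iff]
  have hlam00 : lamHat (2*m) e c P 0 0 = γ * ahat + (1-γ) * bhat := by
    unfold lamHat
    rw [Fin.sum_univ_two, hR00, hR01, hP00, hP10, h2m]
    field_simp
  have hlam01 : lamHat (2*m) e c P 0 1 = (1-γ) * ahat + γ * bhat := by
    unfold lamHat
    rw [Fin.sum_univ_two, hR10, hR11, hP00, hP10, h2m]
    field_simp
  have hlam10 : lamHat (2*m) e c P 1 0 = γ * bhat + (1-γ) * ahat := by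
    unfold lamHat
    rw [Fin.sum_univ_two, hR00, hR01, hP01, hP11, h2m]
    field_simp
  have hlam11 : lamHat (2*m) e c P 1 1 = (1-γ) * bhat + γ * ahat := by
    unfold lamHat
    rw [Fin.sum_univ_two, hR10, hR11, hP01, hP11, h2m]
    field_simp
  have hsum0 : (∑ l', lamHat (2*m) e c P 0 l') = ahat + bhat := by
    rw [Fin.sum_univ_two, hlam00, hlam01]; ring
  have hsum1 : (∑ l', lamHat (2*m) e c P 1 l') = ahat + bhat := by
    rw [Fin.sum_univ_two, hlam10, hlam11]; ring
  -- thetaHat values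
  have hth00 : thetaHat (2*m) e c P 0 0
      = γ * (ahat / (ahat + bhat)) + (1 - γ) * (bhat / (ahat + bhat)) := by
    unfold thetaHat; rw [hlam00, hsum0]; ring
  have hth11 : thetaHat (2*m) e c P 1 1
      = γ * (ahat / (ahat + bhat)) + (1 - γ) * (bhat / (ahat + bhat)) := by
    unfold thetaHat; rw [hlam11, hsum1]; ring
  have hth01 : thetaHat (2*m) e c P 0 1
      = γ * (bhat / (ahat + bhat)) + (1 - γ) * (ahat / (ahat + bhat)) := by
    unfold thetaHat; rw [hlam01, hsum0]; ring
  have hth10 : thetaHat (2*m) e c P 1 0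
      = γ * (bhat / (ahat + bhat)) + (1 - γ) * (ahat / (ahat + bhat)) := by
    unfold thetaHat; rw [hlam10, hsum1]; ring
  -- strict inequality
  have hprod : 0 < (1 - 2*γ) * (ahat - bhat) :=
    mul_pos (by linarith) (by linarith)
  have hlt' : thetaHat (2*m) e c P 0 0 < thetaHat (2*m) e c P 1 0 := by
    rw [hth00, hth10]
    have h1 : γ * (ahat / (ahat + bhat)) + (1 - γ) * (bhat / (ahat + bhat))
        = (γ * ahat + (1-γ) * bhat) / (ahat + bhat) := by ring
    have h2 : γ * (bhat / (ahat + bhat)) + (1 - γ) * (ahat / (ahat + bhat))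
        = (γ * bhat + (1-γ) * ahat) / (ahat + bhat) := by ring
    rw [h1, h2]
    have hXY : γ * ahat + (1-γ) * bhat < γ * bhat + (1-γ) * ahat := by
      have hexp : (1 - 2*γ) * (ahat - bhat)
          = (γ * bhat + (1-γ) * ahat) - (γ * ahat + (1-γ) * bhat) := by ring
      rw [hexp] at hprod; linarith only [hprod]
    first
    | exact (div_lt_div_right hs).mpr hXY
    | exact (div_lt_div_iff_right hs).mpr hXY
    | exact div_lt_div_of_lt hs hXY
    | gcongr
  refine ⟨⟨hth00, hth11⟩, ⟨hth01, hth10⟩, hlt', ?_⟩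
  -- the CPL rule
  intro ω
  have hθpos : 0 < thetaHat (2*m) e c P 0 0 := by
    rw [hth00]
    have h1 : 0 < γ * (ahat / (ahat + bhat)) := mul_pos hγ0 (div_pos hapos hs)
    have h2 : 0 ≤ (1 - γ) * (bhat / (ahat + bhat)) :=
      mul_nonneg (by linarith) (div_nonneg hbhat0 hs.le)
    linarith
  have hlog : Real.log (thetaHat (2*m) e c P 0 0) < Real.log (thetaHat (2*m) e c P 1 0) :=
    Real.log_lt_log hθpos hlt'
  set b0 := bSum (2*m) A e i 0 ω with hb0def
  set b1 := bSum (2*m) A e i 1 ω with hb1def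
  set Lθ := Real.log (thetaHat (2*m) e c P 0 0) with hLθ
  set Lθ' := Real.log (thetaHat (2*m) e c P 1 0) with hLθ'
  have hLth11 : Real.log (thetaHat (2*m) e c P 1 1) = Lθ := by
    rw [hLθ, hth11, hth00]
  have hLth01 : Real.log (thetaHat (2*m) e c P 0 1) = Lθ' := by
    rw [hLθ', hth01, hth10]
  have hcrit0 : cplCrit (2*m) A e c P i ω 0
      = Real.log (1/2) + (b0 * Lθ + b1 * Lθ') := by
    unfold cplCrit
    rw [Fin.sum_univ_two, hLth01]
  have hcrit1 : cplCrit (2*m) A e c P i ω 1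
      = Real.log (1/2) + (b0 * Lθ' + b1 * Lθ) := by
    unfold cplCrit
    rw [Fin.sum_univ_two, hLth11]
  have hsumA : (∑ j, A i j ω * (if e j = 0 then (1:ℝ) else -1)) = b0 - b1 := by
    rw [hb0def, hb1def]
    unfold bSum
    rw [← Finset.sum_sub_distrib]
    apply Finset.sum_congr rfl
    intro j _
    have h2 : e j = 0 ∨ e j = 1 := by omega
    rcases h2 with h | h <;> simp [h] <;> ring
  have hkey : cplCrit (2*m) A e c P i ω 1 < cplCrit (2*m) A e c P i ω 0 ↔ b0 - b1 < 0 := by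
    rw [hcrit0, hcrit1]
    constructor
    · intro h
      by_contra hcon
      push_neg at hcon
      have h3 : 0 ≤ (b0 - b1) * (Lθ' - Lθ) :=
        mul_nonneg (by linarith only [hcon]) (by linarith only [hlog])
      have h4 : (b0 - b1) * (Lθ' - Lθ)
          = b0*Lθ' - b0*Lθ - b1*Lθ' + b1*Lθ := by ring
      rw [h4] at h3
      linarith only [h, h3]
    · intro h
      have h3 : 0 < (b1 - b0) * (Lθ' - Lθ) :=
        mul_pos (by linarith only [h]) (by linarith only [hlog])
      have h4 : (b1 - b0) * (Lθ' - Lθ)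
          = b1*Lθ' - b1*Lθ - b0*Lθ' + b0*Lθ := by ring
      rw [h4] at h3
      linarith only [h3]
  rw [hsumA]
  unfold cHat
  constructor
  · intro h0
    apply hkey.mp
    by_contra hcc
    rw [if_neg hcc] at h0
    exact absurd h0 (by decide)
  · intro h
    rw [if_pos (hkey.mpr h)]
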